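/- Let 1 ≤ p < ∞. The map 𝒞 : L^p([0,1], ℝ) × L^p([0,∞), ℝ) × [0,∞) → L^p([0,1], ℝ), defined by 𝒞(u, v, T)(t) = (T+1)·u(t(T+1)) for 0 ≤ t < 1/(T+1) and 𝒞(u, v, T)(t) = (T+1)·v((T+1)t − 1) for 1/(T+1) < t ≤ 1, is continuous (with respect to the product of the L^p norm topologies and the standard topology on [0,∞)). -/

import Mathlib

open MeasureTheory Set ENNReal Filter Topology

noncomputable section

namespace Stmt1Aux

abbrev μ1 : Measure ℝ := volume.restrict (Set.Icc (0:ℝ) 1)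
abbrev μI : Measure ℝ := volume.restrict (Set.Ici (0:ℝ))

/-- concatenation at the function level -/
def wfun (f g : ℝ → ℝ) : ℝ → ℝ :=
  (Set.Icc (0:ℝ) 1).indicator f + (Set.Ici (1:ℝ)).indicator (fun s => g (s - 1))

/-- dilation at the function level -/
def Dfun (a : ℝ) (F : ℝ → ℝ) : ℝ → ℝ := fun t => a * F (a * t)

def Cfun (a : ℝ) (f g : ℝ → ℝ) : ℝ → ℝ := Dfun a (wfun f g)

lemma wfun_sub (f g f' g' : ℝ → ℝ) :
    wfun f g - wfun f' g' = wfun (f - f') (g - g') := by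
  funext s
  simp only [wfun, Pi.sub_apply, Pi.add_apply, Set.indicator_apply]
  split_ifs <;> ring

lemma Cfun_sub (a : ℝ) (f g f' g' : ℝ → ℝ) :
    Cfun a f g - Cfun a f' g' = Cfun a (f - f') (g - g') := by
  funext t
  simp only [Cfun, Dfun, Pi.sub_apply, ← wfun_sub f g f' g']
  ring

lemma mp_shift : MeasurePreserving (fun s : ℝ => s - 1) (volume.restrict (Ici (1:ℝ))) μI := by
  have hpre : (fun s : ℝ => s - 1) ⁻¹' (Ici 0) = Ici (1:ℝ) := by
    ext s; simp [sub_nonneg]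
  have := (measurePreserving_sub_right (volume : Measure ℝ) 1).restrict_preimage
    (measurableSet_Ici (a := (0:ℝ)))
  simpa [hpre] using this

lemma wfun_est {q : ℝ≥0∞} (hq : 1 ≤ q) {f g : ℝ → ℝ}
    (hf : AEStronglyMeasurable f μ1) (hg : AEStronglyMeasurable g μI) :
    AEStronglyMeasurable (wfun f g) volume ∧
      eLpNorm (wfun f g) q volume ≤ eLpNorm f q μ1 + eLpNorm g q μI := by
  have h2 : AEStronglyMeasurable (fun s : ℝ => g (s - 1)) (volume.restrict (Ici (1:ℝ))) :=
    hg.comp_measurePreserving mp_shift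
  have a1 : AEStronglyMeasurable ((Icc (0:ℝ) 1).indicator f) volume :=
    (aestronglyMeasurable_indicator_iff measurableSet_Icc).2 hf
  have a2 : AEStronglyMeasurable ((Ici (1:ℝ)).indicator fun s => g (s - 1)) volume :=
    (aestronglyMeasurable_indicator_iff measurableSet_Ici).2 h2
  have n1 : eLpNorm ((Icc (0:ℝ) 1).indicator f) q volume = eLpNorm f q μ1 :=
    eLpNorm_indicator_eq_eLpNorm_restrict measurableSet_Icc
  have n2 : eLpNorm ((Ici (1:ℝ)).indicator fun s => g (s - 1)) q volume = eLpNorm g q μI := by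
    rw [eLpNorm_indicator_eq_eLpNorm_restrict measurableSet_Ici]
    exact eLpNorm_comp_measurePreserving hg mp_shift
  refine ⟨a1.add a2, ?_⟩
  refine (eLpNorm_add_le a1 a2 hq).trans ?_
  rw [n1, n2]

lemma wfun_memℒp {q : ℝ≥0∞} (hq : 1 ≤ q) {f g : ℝ → ℝ}
    (hf : MemLp f q μ1) (hg : MemLp g q μI) : MemLp (wfun f g) q volume := by
  obtain ⟨hm, hn⟩ := wfun_est hq hf.1 hg.1
  exact ⟨hm, hn.trans_lt (ENNReal.add_lt_top.2 ⟨hf.2, hg.2⟩)⟩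

lemma dil_est {q : ℝ≥0∞} {a : ℝ} (ha : 1 ≤ a) {F : ℝ → ℝ}
    (hF : AEStronglyMeasurable F volume) :
    AEStronglyMeasurable (Dfun a F) μ1 ∧
      eLpNorm (Dfun a F) q μ1 ≤ ENNReal.ofReal a * eLpNorm F q volume := by
  have ha0 : (0:ℝ) < a := lt_of_lt_of_le one_pos ha
  have hpre : (fun t : ℝ => a * t) ⁻¹' (Icc 0 a) = Icc (0:ℝ) 1 := by
    ext t
    simp only [mem_preimage, mem_Icc]
    constructor
    · rintro ⟨h1, h2⟩
      constructor
      · nlinarith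
      · nlinarith
    · rintro ⟨h1, h2⟩
      constructor
      · nlinarith
      · nlinarith
  have hmap : Measure.map (fun t : ℝ => a * t) μ1
      = ENNReal.ofReal a⁻¹ • volume.restrict (Icc 0 a) := by
    show Measure.map _ (volume.restrict (Icc (0:ℝ) 1)) = _
    rw [← hpre, ← Measure.restrict_map (measurable_const_mul a) measurableSet_Icc,
      Real.map_volume_mul_left ha0.ne', Measure.restrict_smul,
      abs_of_pos (inv_pos.2 ha0)]
  have mp : MeasurePreserving (fun t : ℝ => a * t) (ENNReal.ofReal a • μ1)
      (volume.restrict (Icc 0 a)) := by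
    refine ⟨measurable_const_mul a, ?_⟩
    rw [Measure.map_smul, hmap, smul_smul, ← ENNReal.ofReal_mul ha0.le,
      mul_inv_cancel₀ ha0.ne', ENNReal.ofReal_one, one_smul]
  have hFr : AEStronglyMeasurable F (volume.restrict (Icc 0 a)) := hF.restrict
  have hcomp : AEStronglyMeasurable (F ∘ fun t : ℝ => a * t) (ENNReal.ofReal a • μ1) :=
    hFr.comp_measurePreserving mp
  have hle : μ1 ≤ ENNReal.ofReal a • μ1 := by
    refine Measure.le_iff.2 fun s _ => ?_
    simp only [Measure.smul_apply, smul_eq_mul]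
    exact le_mul_of_one_le_left (by simp) (ENNReal.one_le_ofReal.2 ha)
  have asm1 : AEStronglyMeasurable (F ∘ fun t : ℝ => a * t) μ1 := hcomp.mono_measure hle
  have hDeq : Dfun a F = a • (F ∘ fun t : ℝ => a * t) := rfl
  constructor
  · rw [hDeq]; exact asm1.const_smul a
  · rw [hDeq, eLpNorm_const_smul]
    have h1 : eLpNorm (F ∘ fun t : ℝ => a * t) q μ1 ≤ eLpNorm F q volume :=
      calc eLpNorm (F ∘ fun t : ℝ => a * t) q μ1
          ≤ eLpNorm (F ∘ fun t : ℝ => a * t) q (ENNReal.ofReal a • μ1) :=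
            eLpNorm_mono_measure _ hle
        _ = eLpNorm F q (volume.restrict (Icc 0 a)) :=
            eLpNorm_comp_measurePreserving hFr mp
        _ ≤ eLpNorm F q volume := eLpNorm_mono_measure _ Measure.restrict_le_self
    rw [← Real.enorm_eq_ofReal ha0.le]
    exact mul_le_mul_right h1 _

lemma Cfun_memℒp {q : ℝ≥0∞} (hq : 1 ≤ q) {a : ℝ} (ha : 1 ≤ a) {f g : ℝ → ℝ}
    (hf : MemLp f q μ1) (hg : MemLp g q μI) : MemLp (Cfun a f g) q μ1 := by
  obtain ⟨hm, hn⟩ := wfun_est hq hf.1 hg.1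
  obtain ⟨hm2, hn2⟩ := dil_est (q := q) ha hm
  refine ⟨hm2, hn2.trans_lt ?_⟩
  exact ENNReal.mul_lt_top ENNReal.ofReal_lt_top
    (hn.trans_lt (ENNReal.add_lt_top.2 ⟨hf.2, hg.2⟩))


lemma mu1_univ : μ1 univ = 1 := by
  rw [Measure.restrict_apply_univ, Real.volume_Icc]
  norm_num

lemma dil_cont {q : ℝ≥0∞} (hq : 1 ≤ q) (hq' : q ≠ ∞) {F : ℝ → ℝ} (hF : MemLp F q volume)
    {a₀ : ℝ} (ha₀ : 1 ≤ a₀) {ε : ℝ≥0∞} (hε : 0 < ε) (hε' : ε ≠ ∞) :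
    ∃ δ : ℝ, 0 < δ ∧ δ ≤ 1 ∧ ∀ a : ℝ, 1 ≤ a → |a - a₀| < δ →
      eLpNorm (Dfun a F - Dfun a₀ F) q μ1 ≤ ε := by
  set M := a₀ + 1 with hM
  have hM1 : (1:ℝ) ≤ M := by linarith
  have hM0 : (0:ℝ) < M := by linarith
  have hε3 : (0:ℝ≥0∞) < ε / 3 := ENNReal.div_pos hε.ne' (by norm_num)
  have hε3' : ε / 3 ≠ ∞ := by
    simp only [ne_eq, ENNReal.div_eq_top]
    rintro (⟨-, h⟩ | ⟨h, -⟩)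
    · norm_num at h
    · exact hε' h
  set ε₁ : ℝ≥0∞ := (ε / 3) / ENNReal.ofReal M with hε₁def
  have hε₁ : ε₁ ≠ 0 := (ENNReal.div_pos hε3.ne' ENNReal.ofReal_ne_top).ne'
  obtain ⟨φ, φsupp, φapprox, φcont, φmem⟩ :=
    hF.exists_hasCompactSupport_eLpNorm_sub_le hq' hε₁
  obtain ⟨Cb, hCb⟩ := φcont.bounded_above_of_compact_support φsupp
  have hCb0 : (0:ℝ) ≤ Cb := le_trans (norm_nonneg _) (hCb 0)
  have φuc : UniformContinuous φ :=
    φcont.uniformContinuous_of_tendsto_cocompact φsupp.is_zero_at_infty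
  set η : ℝ := (ε / 3).toReal with hη
  have hη0 : 0 < η := ENNReal.toReal_pos hε3.ne' hε3'
  obtain ⟨r, hr0, hr⟩ := Metric.uniformContinuous_iff.1 φuc (η / (2 * M)) (by positivity)
  set δ : ℝ := min 1 (min r (η / (2 * (Cb + 1)))) with hδ
  have hδ0 : 0 < δ := lt_min one_pos (lt_min hr0 (by positivity))
  refine ⟨δ, hδ0, min_le_left _ _, fun a ha haa => ?_⟩
  have haM : a ≤ M := by
    have h1 := (abs_lt.1 (lt_of_lt_of_le haa (min_le_left _ _))).2
    linarith
  have ha0M : a₀ ≤ M := by linarith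
  set G : ℝ → ℝ := F - φ with hG
  have hGm : AEStronglyMeasurable G volume := hF.1.sub φmem.1
  -- the three pieces
  obtain ⟨mGa, nGa⟩ := dil_est (q := q) ha hGm
  obtain ⟨mGa0, nGa0⟩ := dil_est (q := q) ha₀ hGm
  have φm : AEStronglyMeasurable φ volume := φcont.aestronglyMeasurable
  obtain ⟨mpa, _⟩ := dil_est (q := q) ha φm
  obtain ⟨mpa0, _⟩ := dil_est (q := q) ha₀ φm
  -- pointwise decomposition
  have hdecomp : Dfun a F - Dfun a₀ F
      = (Dfun a G - Dfun a₀ G) + (Dfun a φ - Dfun a₀ φ) := by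
    funext t
    simp only [Dfun, Pi.sub_apply, Pi.add_apply, hG]
    ring
  -- bound on Dfun a G terms
  have hfrac : ENNReal.ofReal M * ε₁ ≤ ε / 3 := ENNReal.mul_div_le
  have hGbound : ∀ b : ℝ, 1 ≤ b → b ≤ M →
      eLpNorm (Dfun b G) q μ1 ≤ ε / 3 := by
    intro b hb hbM
    refine le_trans (dil_est (q := q) hb hGm).2 (le_trans ?_ hfrac)
    exact mul_le_mul' (ENNReal.ofReal_le_ofReal hbM) φapprox
  -- uniform bound on the φ difference
  have hφdiff : ∀ᵐ t ∂μ1, ‖(Dfun a φ - Dfun a₀ φ) t‖ ≤ η := by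
    filter_upwards [ae_restrict_mem measurableSet_Icc] with t hti
    obtain ⟨ht0, ht1⟩ := hti
    simp only [Dfun, Pi.sub_apply, Real.norm_eq_abs]
    have key : a * φ (a * t) - a₀ * φ (a₀ * t)
        = (a - a₀) * φ (a * t) + a₀ * (φ (a * t) - φ (a₀ * t)) := by ring
    rw [key]
    have hdista : |a - a₀| < δ := haa
    have h1 : |(a - a₀) * φ (a * t)| ≤ δ * Cb := by
      rw [abs_mul]
      have := hCb (a * t)
      rw [Real.norm_eq_abs] at this
      exact mul_le_mul hdista.le this (abs_nonneg _) hδ0.le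
    have hdist2 : dist (a * t) (a₀ * t) < r := by
      rw [Real.dist_eq]
      have : a * t - a₀ * t = (a - a₀) * t := by ring
      rw [this, abs_mul, abs_of_nonneg ht0]
      have hδr : δ ≤ r := le_trans (min_le_right _ _) (min_le_left _ _)
      calc |a - a₀| * t ≤ |a - a₀| * 1 := by
            exact mul_le_mul_of_nonneg_left ht1 (abs_nonneg _)
        _ = |a - a₀| := mul_one _
        _ < δ := haa
        _ ≤ r := hδr
    have h2 : |a₀ * (φ (a * t) - φ (a₀ * t))| ≤ M * (η / (2 * M)) := by
      rw [abs_mul, abs_of_nonneg (by linarith : (0:ℝ) ≤ a₀)]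
      have := hr hdist2
      rw [Real.dist_eq] at this
      exact mul_le_mul ha0M this.le (abs_nonneg _) hM0.le
    have hδC : δ * Cb ≤ η / 2 := by
      have hδ2 : δ ≤ η / (2 * (Cb + 1)) := le_trans (min_le_right _ _) (min_le_right _ _)
      have : δ * Cb ≤ (η / (2 * (Cb + 1))) * Cb :=
        mul_le_mul_of_nonneg_right hδ2 hCb0
      calc δ * Cb ≤ (η / (2 * (Cb + 1))) * Cb := this
        _ ≤ η / 2 := by
            rw [div_mul_eq_mul_div, div_le_div_iff₀ (by positivity) (by norm_num)]
            nlinarith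
    have hMη : M * (η / (2 * M)) = η / 2 := by
      field_simp
    calc |(a - a₀) * φ (a * t) + a₀ * (φ (a * t) - φ (a₀ * t))|
        ≤ |(a - a₀) * φ (a * t)| + |a₀ * (φ (a * t) - φ (a₀ * t))| := abs_add_le _ _
      _ ≤ δ * Cb + M * (η / (2 * M)) := add_le_add h1 h2
      _ ≤ η / 2 + η / 2 := by rw [hMη]; exact add_le_add_left hδC _
      _ = η := add_halves η
  have hφbound : eLpNorm (Dfun a φ - Dfun a₀ φ) q μ1 ≤ ε / 3 := by
    refine le_trans (eLpNorm_le_of_ae_bound hφdiff) ?_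
    rw [mu1_univ, ENNReal.one_rpow, one_mul, hη, ENNReal.ofReal_toReal hε3']
  -- assemble
  calc eLpNorm (Dfun a F - Dfun a₀ F) q μ1
      = eLpNorm ((Dfun a G - Dfun a₀ G) + (Dfun a φ - Dfun a₀ φ)) q μ1 := by
        rw [hdecomp]
    _ ≤ eLpNorm (Dfun a G - Dfun a₀ G) q μ1 + eLpNorm (Dfun a φ - Dfun a₀ φ) q μ1 :=
        eLpNorm_add_le (mGa.sub mGa0) (mpa.sub mpa0) hq
    _ ≤ (eLpNorm (Dfun a G) q μ1 + eLpNorm (Dfun a₀ G) q μ1) + ε / 3 := by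
        refine add_le_add (eLpNorm_sub_le mGa mGa0 hq) hφbound
    _ ≤ (ε / 3 + ε / 3) + ε / 3 :=
        add_le_add_left (add_le_add (hGbound a ha haM) (hGbound a₀ ha₀ ha0M)) _
    _ = ε := ENNReal.add_thirds ε

end Stmt1Aux

open Stmt1Aux

theorem stmt1 (p : ℝ) (hp : 1 ≤ p) [Fact (1 ≤ ENNReal.ofReal p)] :
    ∃ C : Lp ℝ (ENNReal.ofReal p) (volume.restrict (Set.Icc (0:ℝ) 1)) ×
          Lp ℝ (ENNReal.ofReal p) (volume.restrict (Set.Ici (0:ℝ))) ×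
          {T : ℝ // 0 ≤ T} →
          Lp ℝ (ENNReal.ofReal p) (volume.restrict (Set.Icc (0:ℝ) 1)),
      Continuous C ∧
      ∀ (u : Lp ℝ (ENNReal.ofReal p) (volume.restrict (Set.Icc (0:ℝ) 1)))
        (v : Lp ℝ (ENNReal.ofReal p) (volume.restrict (Set.Ici (0:ℝ))))
        (T : {T : ℝ // 0 ≤ T}),
        (C (u, v, T) : ℝ → ℝ) =ᵐ[volume.restrict (Set.Icc (0:ℝ) 1)]
          fun t : ℝ =>
            if t < 1 / (T.1 + 1) then (T.1 + 1) * u (t * (T.1 + 1))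
            else (T.1 + 1) * v ((T.1 + 1) * t - 1) := by
  have hq : 1 ≤ ENNReal.ofReal p := Fact.out
  set q := ENNReal.ofReal p with hqdef
  have hq' : q ≠ ∞ := ENNReal.ofReal_ne_top
  have hmem : ∀ z : Lp ℝ q μ1 × Lp ℝ q μI × {T : ℝ // 0 ≤ T},
      MemLp (Cfun (z.2.2.1 + 1) ⇑z.1 ⇑z.2.1) q μ1 := fun z =>
    Cfun_memℒp hq (by linarith [z.2.2.2] : (1:ℝ) ≤ z.2.2.1 + 1)
      (Lp.memLp z.1) (Lp.memLp z.2.1)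
  refine ⟨fun z => (hmem z).toLp _, ?_, ?_⟩
  · -- continuity
    rw [continuous_iff_continuousAt]
    rintro ⟨u₀, v₀, T₀⟩
    set z₀ : Lp ℝ q μ1 × Lp ℝ q μI × {T : ℝ // 0 ≤ T} := (u₀, v₀, T₀) with hz₀
    rw [ContinuousAt, EMetric.tendsto_nhds]
    intro ε hε
    set a₀ : ℝ := T₀.1 + 1 with ha₀def
    have ha₀ : 1 ≤ a₀ := by linarith [T₀.2]
    set F₀ : ℝ → ℝ := wfun ⇑u₀ ⇑v₀ with hF₀def
    have hF₀ : MemLp F₀ q volume := wfun_memℒp hq (Lp.memLp u₀) (Lp.memLp v₀)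
    set M : ℝ := a₀ + 1 with hMdef
    set ε' := min ε 1 with hε'def
    have hε'0 : 0 < ε' := lt_min hε one_pos
    have hε't : ε' ≠ ∞ := ne_top_of_le_ne_top ENNReal.one_ne_top (min_le_right _ _)
    have hε'4 : (0:ℝ≥0∞) < ε' / 4 := ENNReal.div_pos hε'0.ne' (by norm_num)
    have hε'4t : ε' / 4 ≠ ∞ := by
      simp only [ne_eq, ENNReal.div_eq_top]
      rintro (⟨-, h⟩ | ⟨h, -⟩)
      · norm_num at h
      · exact hε't h
    obtain ⟨δ₂, hδ₂0, hδ₂1, hδ₂⟩ := dil_cont hq hq' hF₀ ha₀ hε'4 hε'4t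
    set δ₁ : ℝ≥0∞ := (ε' / 4) / (8 * ENNReal.ofReal M) with hδ₁def
    have hδ₁0 : 0 < δ₁ := ENNReal.div_pos hε'4.ne' (by finiteness)
    -- eventually facts
    have e1 : ∀ᶠ z : Lp ℝ q μ1 × Lp ℝ q μI × {T : ℝ // 0 ≤ T} in 𝓝 z₀,
        edist z.1 u₀ < δ₁ :=
      (continuous_fst.tendsto z₀) (EMetric.ball_mem_nhds u₀ hδ₁0)
    have e2 : ∀ᶠ z : Lp ℝ q μ1 × Lp ℝ q μI × {T : ℝ // 0 ≤ T} in 𝓝 z₀,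
        edist z.2.1 v₀ < δ₁ :=
      ((continuous_fst.comp continuous_snd).tendsto z₀) (EMetric.ball_mem_nhds v₀ hδ₁0)
    have e3 : ∀ᶠ z : Lp ℝ q μ1 × Lp ℝ q μI × {T : ℝ // 0 ≤ T} in 𝓝 z₀,
        |z.2.2.1 - T₀.1| < δ₂ := by
      have hc : Continuous fun z : Lp ℝ q μ1 × Lp ℝ q μI × {T : ℝ // 0 ≤ T} => z.2.2.1 :=
        continuous_subtype_val.comp (continuous_snd.comp continuous_snd)
      have h : ∀ᶠ z : Lp ℝ q μ1 × Lp ℝ q μI × {T : ℝ // 0 ≤ T} in 𝓝 z₀,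
          z.2.2.1 ∈ Metric.ball T₀.1 δ₂ :=
        (hc.tendsto z₀) (Metric.ball_mem_nhds T₀.1 hδ₂0)
      exact h.mono fun z hz => by rwa [Metric.mem_ball, Real.dist_eq] at hz
    filter_upwards [e1, e2, e3] with z h1 h2 h3
    obtain ⟨u, v, T⟩ := z
    set a : ℝ := T.1 + 1 with hadef
    have ha : 1 ≤ a := by linarith [T.2]
    have haa₀ : |a - a₀| < δ₂ := by
      have heq : a - a₀ = T.1 - T₀.1 := by rw [hadef, ha₀def]; ring
      rw [heq]; exact h3
    have haM : ENNReal.ofReal a ≤ ENNReal.ofReal M := by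
      refine ENNReal.ofReal_le_ofReal ?_
      have hx := (abs_lt.1 haa₀).2
      rw [hMdef]; linarith
    -- the estimate
    have key : edist ((hmem (u, v, T)).toLp _) ((hmem z₀).toLp _) ≤ ε' / 4 + ε' / 4 := by
      rw [Lp.edist_def]
      have hcongr : (⇑((hmem (u, v, T)).toLp _) : ℝ → ℝ) - ⇑((hmem z₀).toLp _)
          =ᵐ[μ1] Cfun a ⇑u ⇑v - Cfun a₀ ⇑u₀ ⇑v₀ :=
        ((hmem (u, v, T)).coeFn_toLp).sub ((hmem z₀).coeFn_toLp)
      rw [eLpNorm_congr_ae hcongr]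
      have hsplit : Cfun a ⇑u ⇑v - Cfun a₀ ⇑u₀ ⇑v₀
          = (Cfun a ⇑u ⇑v - Cfun a ⇑u₀ ⇑v₀) + (Cfun a ⇑u₀ ⇑v₀ - Cfun a₀ ⇑u₀ ⇑v₀) := by
        rw [sub_add_sub_cancel]
      have m1 : AEStronglyMeasurable (Cfun a ⇑u ⇑v) μ1 := (hmem (u, v, T)).1
      have m2 : AEStronglyMeasurable (Cfun a ⇑u₀ ⇑v₀) μ1 :=
        (Cfun_memℒp hq ha (Lp.memLp u₀) (Lp.memLp v₀)).1
      have m3 : AEStronglyMeasurable (Cfun a₀ ⇑u₀ ⇑v₀) μ1 := (hmem z₀).1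
      rw [hsplit]
      refine le_trans (eLpNorm_add_le (m1.sub m2) (m2.sub m3) hq) (add_le_add ?_ ?_)
      · -- linear part
        rw [Cfun_sub]
        have hdu : AEStronglyMeasurable (⇑u - ⇑u₀) μ1 :=
          (Lp.memLp u).1.sub (Lp.memLp u₀).1
        have hdv : AEStronglyMeasurable (⇑v - ⇑v₀) μI :=
          (Lp.memLp v).1.sub (Lp.memLp v₀).1
        obtain ⟨hwm, hwn⟩ := wfun_est hq hdu hdv
        refine le_trans (dil_est ha hwm).2 ?_
        have hb1 : eLpNorm (⇑u - ⇑u₀) q μ1 = edist u u₀ := (Lp.edist_def u u₀).symm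
        have hb2 : eLpNorm (⇑v - ⇑v₀) q μI = edist v v₀ := (Lp.edist_def v v₀).symm
        calc ENNReal.ofReal a * eLpNorm (wfun (⇑u - ⇑u₀) (⇑v - ⇑v₀)) q volume
            ≤ ENNReal.ofReal M * (edist u u₀ + edist v v₀) := by
              refine mul_le_mul' haM ?_
              rw [← hb1, ← hb2]; exact hwn
          _ ≤ ENNReal.ofReal M * (δ₁ + δ₁) :=
              mul_le_mul' le_rfl (add_le_add h1.le h2.le)
          _ = (2 * ENNReal.ofReal M) * δ₁ := by ring
          _ ≤ (8 * ENNReal.ofReal M) * δ₁ := by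
              refine mul_le_mul' (mul_le_mul' (by norm_num) le_rfl) le_rfl
          _ ≤ ε' / 4 := ENNReal.mul_div_le
      · -- dilation part
        exact hδ₂ a ha haa₀
    refine lt_of_le_of_lt key ?_
    have h4 : ε' / 4 + ε' / 4 = ε' / 2 := by
      rw [ENNReal.div_add_div_same, ← two_mul, show (4:ℝ≥0∞) = 2 * 2 from by norm_num,
        ENNReal.mul_div_mul_left _ _ two_ne_zero ENNReal.ofNat_ne_top]
    rw [h4]
    exact lt_of_lt_of_le (ENNReal.half_lt_self hε'0.ne' hε't) (min_le_left _ _)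
  · -- a.e. identity
    intro u v T
    set a : ℝ := T.1 + 1 with hadef
    have ha : 1 ≤ a := by linarith [T.2]
    have ha0 : (0:ℝ) < a := by linarith
    refine ((hmem (u, v, T)).coeFn_toLp).trans ?_
    have h0 : μ1 {1 / a} = 0 :=
      le_antisymm ((Measure.le_iff'.1 Measure.restrict_le_self _).trans_eq
        Real.volume_singleton) (by simp)
    have hne : ∀ᵐ t ∂μ1, t ≠ 1 / a := by
      rw [ae_iff]
      have hset : {t : ℝ | ¬t ≠ 1 / a} = {1 / a} := by
        ext t; simp [not_not]
      rw [hset]; exact h0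
    filter_upwards [hne, ae_restrict_mem measurableSet_Icc] with t ht hti
    obtain ⟨ht0, ht1⟩ := hti
    simp only [Cfun, Dfun, wfun, Pi.add_apply]
    by_cases hlt : t < 1 / a
    · rw [if_pos hlt]
      have hat1 : a * t < 1 := by
        rw [lt_div_iff₀ ha0] at hlt
        linarith [mul_comm t a]
      have hat0 : 0 ≤ a * t := mul_nonneg ha0.le ht0
      rw [Set.indicator_of_mem (show a * t ∈ Icc (0:ℝ) 1 from ⟨hat0, hat1.le⟩),
        Set.indicator_of_notMem (show a * t ∉ Ici (1:ℝ) from by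
          simp only [mem_Ici, not_le]; exact hat1)]
      rw [add_zero, mul_comm a t]
    · rw [if_neg hlt]
      have hgt : 1 / a < t := lt_of_le_of_ne (not_lt.1 hlt) (Ne.symm ht)
      have hat1 : 1 < a * t := by
        rw [div_lt_iff₀ ha0] at hgt
        linarith [mul_comm t a]
      rw [Set.indicator_of_notMem (show a * t ∉ Icc (0:ℝ) 1 from by
          simp only [mem_Icc, not_and, not_le]; intro _; exact hat1),
        Set.indicator_of_mem (show a * t ∈ Ici (1:ℝ) from hat1.le)]
      rw [zero_add]
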